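/- Let q ∈ (G, 2) where G = (1+√5)/2. If x ∈ [0, 1/(q(q−1))] is such that f_0(x) = qx ∈ (U_q + 1) ∩ U_q, then x ∈ U_q^{(2)} ∩ J_q (so x lies in the switch region and has exactly two base q expansions), and hence q ∈ B_2. -/

import Mathlib

open Set

/-- Projection map: the value of the (0-indexed) digit sequence `a` in base `q`,
`π_q(a) = Σ_{j=0}^∞ a_j q^{-(j+1)}`. -/
noncomputable def piQ (q : ℝ) (a : ℕ → ℝ) : ℝ := ∑' j : ℕ, a j / q ^ (j + 1)

/-- `a` is a sequence of digits in `{0,1}`. -/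
def IsDigitSeq (a : ℕ → ℝ) : Prop := ∀ j, a j = 0 ∨ a j = 1

/-- `a` is a sequence of digits in `{-1,0,1}`. -/
def IsExtDigitSeq (a : ℕ → ℝ) : Prop := ∀ j, a j = -1 ∨ a j = 0 ∨ a j = 1

/-- The set of base-`q` expansions of `x`. -/
def SigmaSet (q x : ℝ) : Set (ℕ → ℝ) := {a | IsDigitSeq a ∧ piQ q a = x}

/-- The interval `I_q = [0, 1/(q-1)]`. -/
def Iq (q : ℝ) : Set ℝ := Set.Icc 0 (1 / (q - 1))

/-- The switch region `J_q = [1/q, 1/(q(q-1))]`. -/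
def Jq (q : ℝ) : Set ℝ := Set.Icc (1 / q) (1 / (q * (q - 1)))

/-- The set of points of `I_q` having exactly `m` base-`q` expansions. -/
def UqM (q : ℝ) (m : ℕ∞) : Set ℝ := {x | x ∈ Iq q ∧ (SigmaSet q x).encard = m}

/-- The set of points of `I_q` having a unique base-`q` expansion. -/
def Uq (q : ℝ) : Set ℝ := UqM q 1

/-- `B_m`: the set of bases `q ∈ (1,2)` for which some point has exactly `m` expansions. -/
def Bset (m : ℕ∞) : Set ℝ := {q | q ∈ Set.Ioo (1 : ℝ) 2 ∧ (UqM q m).Nonempty}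

/-- `x` is the `k`-Bonacci number: the root in `(1,2)` of `x^k = x^{k-1} + ⋯ + x + 1`. -/
def IsBonacci (k : ℕ) (x : ℝ) : Prop :=
  x ∈ Set.Ioo (1 : ℝ) 2 ∧ x ^ k = ∑ i ∈ Finset.range k, x ^ i

/-- `a` contains no occurrence of the word `01^k` as a consecutive block. -/
def AvoidsWord01 (k : ℕ) (a : ℕ → ℝ) : Prop :=
  ∀ i, ¬(a i = 0 ∧ ∀ j, 1 ≤ j → j ≤ k → a (i + j) = 1)

/-- `a` contains no occurrence of the word `10^k` as a consecutive block. -/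
def AvoidsWord10 (k : ℕ) (a : ℕ → ℝ) : Prop :=
  ∀ i, ¬(a i = 1 ∧ ∀ j, 1 ≤ j → j ≤ k → a (i + j) = 0)

/-- `S_k`: the set of `{0,1}`-sequences avoiding the words `01^k` and `10^k`. -/
def Sset (k : ℕ) : Set (ℕ → ℝ) := {a | IsDigitSeq a ∧ AvoidsWord01 k a ∧ AvoidsWord10 k a}

/-- `g_{q,k} = f_1^{-(k-1)} ∘ f_0^{-1}`, where `f_0^{-1}(y) = y/q` and `f_1^{-1}(y) = (y+1)/q`. -/
noncomputable def gMap (q : ℝ) (k : ℕ) (x : ℝ) : ℝ := (fun y => (y + 1) / q)^[k - 1] (x / q)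

/-- The maps `f_0(x) = qx` (for `b = false`) and `f_1(x) = qx - 1` (for `b = true`). -/
noncomputable def fDigit (q : ℝ) (b : Bool) (x : ℝ) : ℝ := if b then q * x - 1 else q * x

/-- `(a, b)` is a bounded gap of `C`: a bounded connected component of `ℝ \ C`. -/
def IsGap (C : Set ℝ) (a b : ℝ) : Prop :=
  a < b ∧ a ∈ C ∧ b ∈ C ∧ Set.Ioo a b ∩ C = ∅

/-- The left endpoint of the bridge of `C` lying immediately to the left of the gap `(a, b)`:
the right endpoint of the nearest gap to the left having diameter at least `b - a`
(or `min C` if there is no such gap). -/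
noncomputable def leftBridgeStart (C : Set ℝ) (a b : ℝ) : ℝ :=
  sSup ({sInf C} ∪ {d | ∃ c, IsGap C c d ∧ d ≤ a ∧ b - a ≤ d - c})

/-- The right endpoint of the bridge of `C` lying immediately to the right of the gap `(a, b)`. -/
noncomputable def rightBridgeEnd (C : Set ℝ) (a b : ℝ) : ℝ :=
  sInf ({sSup C} ∪ {c | ∃ d, IsGap C c d ∧ b ≤ c ∧ b - a ≤ d - c})

/-- The (Newhouse) thickness of a compact set `C ⊆ ℝ`: the infimum over all bounded gaps `G`
of the ratio of the length of the bridge on either side of `G` to the length of `G`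
(`∞` if `C` has no bounded gap). -/
noncomputable def thickness (C : Set ℝ) : ENNReal :=
  ⨅ p : {p : ℝ × ℝ // IsGap C p.1 p.2},
    ENNReal.ofReal
      (min ((p.1.1 - leftBridgeStart C p.1.1 p.1.2) / (p.1.2 - p.1.1))
        ((rightBridgeEnd C p.1.1 p.1.2 - p.1.2) / (p.1.2 - p.1.1)))

/-- `B` is contained in a gap of `A`, i.e. in a connected component of `ℝ \ A`. -/
def ContainedInGap (B A : Set ℝ) : Prop :=
  ∃ x ∈ Aᶜ, B ⊆ connectedComponentIn Aᶜ x

/-- Two sets are interleaved if neither is contained in a gap of the other. -/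
def Interleaved (A B : Set ℝ) : Prop :=
  ¬ContainedInGap B A ∧ ¬ContainedInGap A B

/-- `A` and `B` are `ε`-strongly interleaved: any compact sets within Hausdorff distance `ε`
of `A` and `B` respectively are interleaved. -/
def StronglyInterleaved (ε : ℝ) (A B : Set ℝ) : Prop :=
  ∀ A' B' : Set ℝ, IsCompact A' → IsCompact B' →
    EMetric.hausdorffEdist A A' ≤ ENNReal.ofReal ε →
    EMetric.hausdorffEdist B B' ≤ ENNReal.ofReal ε → Interleaved A' B'

/-- The sequence `0^{k-3}(01^{k-1})^∞` (0-indexed). -/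
noncomputable def seqG (k : ℕ) : ℕ → ℝ := fun j =>
  if j < k - 3 then 0 else if (j - (k - 3)) % k = 0 then 0 else 1

/-- The sequence `1^{k-3}(10^{k-1})^∞` (0-indexed). -/
noncomputable def seqH (k : ℕ) : ℕ → ℝ := fun j =>
  if j < k - 3 then 1 else if (j - (k - 3)) % k = 0 then 1 else 0

/-- The sequence `(1^{k-1}0)^∞` (0-indexed). -/
noncomputable def seqP (k : ℕ) : ℕ → ℝ := fun j => if j % k = k - 1 then 0 else 1


lemma digit_nonneg {a : ℕ → ℝ} (ha : IsDigitSeq a) (j : ℕ) : 0 ≤ a j := by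
  rcases ha j with h | h <;> simp [h]

lemma digit_le_one {a : ℕ → ℝ} (ha : IsDigitSeq a) (j : ℕ) : a j ≤ 1 := by
  rcases ha j with h | h <;> simp [h]

lemma summable_piQ {q : ℝ} (hq : 1 < q) {a : ℕ → ℝ} (ha : IsDigitSeq a) :
    Summable (fun j => a j / q ^ (j + 1)) := by
  have hq0 : (0 : ℝ) < q := lt_trans one_pos hq
  have hgeo : Summable (fun j : ℕ => (1 / q) ^ j) :=
    summable_geometric_of_lt_one (by positivity) (by rw [div_lt_one hq0]; exact hq)
  refine Summable.of_nonneg_of_le (fun j => div_nonneg (digit_nonneg ha j) (by positivity))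
    (fun j => ?_) hgeo
  rw [one_div_pow]
  exact div_le_div₀ zero_le_one (digit_le_one ha j) (by positivity)
    (pow_le_pow_right₀ hq.le (Nat.le_succ j))

lemma piQ_shift {q : ℝ} (hq : 1 < q) {a : ℕ → ℝ} (ha : IsDigitSeq a) :
    piQ q a = a 0 / q + piQ q (fun j => a (j + 1)) / q := by
  have hq0 : (0 : ℝ) < q := lt_trans one_pos hq
  have hs := summable_piQ hq ha
  unfold piQ
  rw [hs.tsum_eq_zero_add]
  congr 1
  · norm_num
  · rw [div_eq_mul_inv (∑' j : ℕ, a (j + 1) / q ^ (j + 1)), ← tsum_mul_right]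
    apply tsum_congr
    intro j
    rw [pow_succ, ← div_div, div_eq_mul_inv]

/-- Prepend a digit to a digit sequence. -/
def consSeq (d : ℝ) (a : ℕ → ℝ) : ℕ → ℝ := fun j => if j = 0 then d else a (j - 1)

lemma consSeq_shift (d : ℝ) (a : ℕ → ℝ) : (fun j => consSeq d a (j + 1)) = a := by
  funext j; simp [consSeq]

lemma consSeq_isDigitSeq {d : ℝ} (hd : d = 0 ∨ d = 1) {a : ℕ → ℝ} (ha : IsDigitSeq a) :
    IsDigitSeq (consSeq d a) := by
  intro j
  by_cases h : j = 0
  · simpa [consSeq, h] using hd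
  · simpa [consSeq, h] using ha (j - 1)

lemma piQ_cons {q : ℝ} (hq : 1 < q) {d : ℝ} (hd : d = 0 ∨ d = 1) {a : ℕ → ℝ}
    (ha : IsDigitSeq a) : piQ q (consSeq d a) = d / q + piQ q a / q := by
  have := piQ_shift hq (consSeq_isDigitSeq hd ha)
  rwa [consSeq_shift, show consSeq d a 0 = d from rfl] at this

theorem B2_condition
    (q : ℝ) (hq : q ∈ Set.Ioo ((1 + Real.sqrt 5) / 2) 2) (x : ℝ)
    (hx : x ∈ Set.Icc (0 : ℝ) (1 / (q * (q - 1))))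
    (hfx : q * x ∈ ((fun u => u + 1) '' Uq q) ∩ Uq q) :
    x ∈ UqM q 2 ∩ Jq q ∧ q ∈ Bset 2 := by
  obtain ⟨hqG, hq2⟩ := hq
  have h5 : (1 : ℝ) < Real.sqrt 5 := by
    have hs := Real.sq_sqrt (show (0 : ℝ) ≤ 5 by norm_num)
    have hnn := Real.sqrt_nonneg 5
    nlinarith
  have hq1 : (1 : ℝ) < q := by
    have : (1 : ℝ) < (1 + Real.sqrt 5) / 2 := by linarith
    linarith
  have hq0 : (0 : ℝ) < q := lt_trans one_pos hq1
  have hqm1 : (0 : ℝ) < q - 1 := by linarith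
  obtain ⟨hx0, hx1⟩ := hx
  obtain ⟨⟨u, hu, huq⟩, hqxU⟩ := hfx
  simp only [Uq, UqM, Set.mem_setOf_eq] at hu hqxU
  simp only at huq
  -- huq : u + 1 = q * x
  obtain ⟨b, hb⟩ := Set.encard_eq_one.mp hqxU.2
  obtain ⟨c, hc⟩ := Set.encard_eq_one.mp hu.2
  have hbmem : b ∈ SigmaSet q (q * x) := hb ▸ Set.mem_singleton b
  have hcmem : c ∈ SigmaSet q u := hc ▸ Set.mem_singleton c
  obtain ⟨hbd, hbv⟩ := hbmem
  obtain ⟨hcd, hcv⟩ := hcmem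
  set A := consSeq 0 b with hA
  set B := consSeq 1 c with hB
  have hAd : IsDigitSeq A := consSeq_isDigitSeq (Or.inl rfl) hbd
  have hBd : IsDigitSeq B := consSeq_isDigitSeq (Or.inr rfl) hcd
  have hAv : piQ q A = x := by
    rw [hA, piQ_cons hq1 (Or.inl rfl) hbd, hbv]
    field_simp
    ring
  have hBv : piQ q B = x := by
    rw [hB, piQ_cons hq1 (Or.inr rfl) hcd, hcv]
    field_simp
    linarith
  have hSigma : SigmaSet q x = {A, B} := by
    ext a
    constructor
    · rintro ⟨had, hav⟩
      have hshift := piQ_shift hq1 had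
      have hsd : IsDigitSeq (fun j => a (j + 1)) := fun j => had (j + 1)
      rcases had 0 with h0 | h0
      · left
        have hsv : piQ q (fun j => a (j + 1)) = q * x := by
          rw [hav, h0] at hshift
          field_simp at hshift
          linarith
        have : (fun j => a (j + 1)) ∈ SigmaSet q (q * x) := ⟨hsd, hsv⟩
        rw [hb, Set.mem_singleton_iff] at this
        funext j
        cases j with
        | zero => simp [hA, consSeq, h0]
        | succ n =>
          have := congrFun this n
          simp [hA, consSeq, this]
      · right
        have hsv : piQ q (fun j => a (j + 1)) = u := by
          rw [hav, h0] at hshift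
          field_simp at hshift
          linarith
        have : (fun j => a (j + 1)) ∈ SigmaSet q u := ⟨hsd, hsv⟩
        rw [hc, Set.mem_singleton_iff] at this
        funext j
        cases j with
        | zero => simp [hB, consSeq, h0]
        | succ n =>
          have := congrFun this n
          simp [hB, consSeq, this]
    · rintro (rfl | rfl)
      · exact ⟨hAd, hAv⟩
      · exact ⟨hBd, hBv⟩
  have hABne : A ≠ B := by
    intro h
    have := congrFun h 0
    simp [hA, hB, consSeq] at this
  have hcard : (SigmaSet q x).encard = 2 := by
    rw [hSigma, Set.encard_pair hABne]
  have hxIq : x ∈ Iq q := by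
    constructor
    · exact hx0
    · refine le_trans hx1 ?_
      rw [div_le_div_iff₀ (by positivity) hqm1]
      nlinarith
  have hxJq : x ∈ Jq q := by
    constructor
    · rw [div_le_iff₀ hq0]
      have hu0 : 0 ≤ u := hu.1.1
      nlinarith
    · exact hx1
  have hxU2 : x ∈ UqM q 2 := ⟨hxIq, hcard⟩
  exact ⟨⟨hxU2, hxJq⟩, ⟨hq1, hq2⟩, ⟨x, hxU2⟩⟩
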